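/- For every real x ≥ 1 there is at least one superabundant number in the interval [x, 2x). -/

import Mathlib

open Real Finset

noncomputable section

/-- Sum of divisors of `n`. -/
def sigma1 (n : ℕ) : ℕ := n.divisors.sum id

/-- `n` is superabundant if `σ(n)/n > σ(m)/m` for all positive `m < n`. -/
def Superabundant (n : ℕ) : Prop :=
  0 < n ∧ ∀ m : ℕ, 0 < m → m < n → (sigma1 m : ℝ) / m < (sigma1 n : ℝ) / n

/-- Robin's quotient `f(n) = σ(n)/(n log log n)`. -/
def robinF (n : ℕ) : ℝ := (sigma1 n : ℝ) / (n * Real.log (Real.log n))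

/-- `n` is extremely abundant. -/
def ExtremelyAbundant (n : ℕ) : Prop :=
  n = 10080 ∨ (10080 < n ∧ ∀ m : ℕ, 10080 ≤ m → m < n → robinF m < robinF n)

lemma sigma1_two_mul {n : ℕ} (hn : 0 < n) : 2 * sigma1 n + 1 ≤ sigma1 (2 * n) := by
  have h1 : (1 : ℕ) ∉ n.divisors.image (fun d => 2 * d) := by
    simp only [Finset.mem_image, not_exists]
    intro d hd
    have : 0 < d := Nat.pos_of_mem_divisors hd.1
    omega
  have hsub : insert 1 (n.divisors.image (fun d => 2 * d)) ⊆ (2 * n).divisors := by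
    intro d hd
    rcases Finset.mem_insert.1 hd with rfl | hd
    · exact Nat.mem_divisors.2 ⟨one_dvd _, by omega⟩
    · obtain ⟨e, he, rfl⟩ := Finset.mem_image.1 hd
      exact Nat.mem_divisors.2 ⟨mul_dvd_mul_left 2 (Nat.dvd_of_mem_divisors he), by omega⟩
  have hsum : (insert 1 (n.divisors.image (fun d => 2 * d))).sum id = 2 * sigma1 n + 1 := by
    rw [Finset.sum_insert h1, Finset.sum_image (by intro a _ b _ h; have h' : 2 * a = 2 * b := h; omega)]
    simp [sigma1, Finset.mul_sum]
    omega
  calc 2 * sigma1 n + 1 = (insert 1 (n.divisors.image (fun d => 2 * d))).sum id := hsum.symm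
    _ ≤ (2 * n).divisors.sum id := Finset.sum_le_sum_of_subset hsub
    _ = sigma1 (2 * n) := rfl

lemma ratio_lt {n : ℕ} (hn : 0 < n) :
    (sigma1 n : ℝ) / n < (sigma1 (2 * n) : ℝ) / ((2 * n : ℕ) : ℝ) := by
  have key := sigma1_two_mul hn
  have hn' : (0 : ℝ) < n := by exact_mod_cast hn
  rw [div_lt_div_iff₀ hn' (by positivity)]
  have : (2 * sigma1 n + 1 : ℝ) ≤ (sigma1 (2 * n) : ℝ) := by exact_mod_cast key
  push_cast
  nlinarith [hn', this]

lemma sa_one : Superabundant 1 := ⟨one_pos, fun m hm hlt => by omega⟩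

lemma sa_step {n : ℕ} (hn : Superabundant n) :
    ∃ m, Superabundant m ∧ n < m ∧ m ≤ 2 * n := by
  classical
  have hn0 := hn.1
  have hP : ∃ k, n < k ∧ (sigma1 n : ℝ) / n < (sigma1 k : ℝ) / k :=
    ⟨2 * n, by omega, ratio_lt hn0⟩
  have hm := Nat.find_spec hP
  refine ⟨Nat.find hP, ⟨lt_trans hn0 hm.1, ?_⟩, hm.1,
    Nat.find_min' hP ⟨by omega, ratio_lt hn0⟩⟩
  intro k hk hkm
  rcases lt_trichotomy k n with h | h | h
  · exact (hn.2 k hk h).trans hm.2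
  · subst h; exact hm.2
  · have hmin := Nat.find_min hP hkm
    push_neg at hmin
    exact lt_of_le_of_lt (hmin h) hm.2

theorem superabundant_in_interval (x : ℝ) (hx : 1 ≤ x) :
    ∃ n : ℕ, Superabundant n ∧ x ≤ (n : ℝ) ∧ (n : ℝ) < 2 * x := by
  classical
  set b := ⌈2 * x⌉₊ with hb
  have hb2 : 2 ≤ b := by
    by_contra h
    push_neg at h
    have : b ≤ 1 := by omega
    have := Nat.ceil_le.1 (hb ▸ this)
    norm_num at this
    linarith
  set P : ℕ → Prop := fun k => Superabundant k ∧ k < b with hPdef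
  set N := Nat.findGreatest P (b - 1) with hN
  have hP1 : P 1 := ⟨sa_one, by omega⟩
  have hNspec : P N := Nat.findGreatest_spec (m := 1) (by omega) hP1
  have hNx : x ≤ (N : ℝ) := by
    by_contra h
    push_neg at h
    obtain ⟨m, hsa, hNm, hm2⟩ := sa_step hNspec.1
    have hmb : m < b := by
      rw [hb]
      apply Nat.lt_ceil.2
      have h2 : (m : ℝ) ≤ 2 * N := by exact_mod_cast hm2
      linarith
    exact Nat.findGreatest_is_greatest hNm (by omega) ⟨hsa, hmb⟩
  exact ⟨N, hNspec.1, hNx, Nat.lt_ceil.1 hNspec.2⟩
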